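/- Logarithmic transform of supersolutions: assume (H1) and (H2), with C > 0 the constant in the quadratic growth bound for F. Define the exponentially transformed generator f by f(t,x,y,z,α,β) := 2Cy·[F(t, x, (ln y)/(2C), z/(2Cy), α, β) − |z|²/(4Cy²)] for y > 0 and f(t,x,y,z,α,β) := 0 for y ≤ 0 (f is continuous on the region y > 0). Let w : [0,T]×ℝⁿ → ℝ be a viscosity supersolution of the obstacle Isaacs equation E(f, e^{2Ch}, e^{2Ch'}, e^{2Cg}), and suppose e^{2Ch(t,x)} ≤ w(t,x) ≤ e^{2Ch'(t,x)} for all (t,x). Then u := (ln w)/(2C) is a viscosity supersolution of the equation (I⁻). -/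

import Mathlib

open Set Filter Topology

noncomputable section

/-- Euclidean space `ℝⁿ`. -/
abbrev En (n : ℕ) : Type := EuclideanSpace ℝ (Fin n)

/-- Frobenius norm of a matrix. -/
noncomputable def frobNorm {n d : ℕ} (M : Matrix (Fin n) (Fin d) ℝ) : ℝ :=
  Real.sqrt (∑ i, ∑ j, (M i j) ^ 2)

/-- Row vector `q` multiplied by the matrix `M`. -/
def rowMul {n d : ℕ} (q : En n) (M : Matrix (Fin n) (Fin d) ℝ) : En d :=
  WithLp.toLp 2 (fun j => ∑ i, q i * M i j)

/-- The lower Hamiltonian `H⁻ = sup_α inf_β [½Tr(σσᵀX) + ⟨b,q⟩ + f(t,x,r,qσ,α,β)]`,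
for a generic generator `f`. -/
noncomputable def Hinf {n d : ℕ} (A B : Type)
    (b : ℝ → En n → A → B → En n)
    (σm : ℝ → En n → A → B → Matrix (Fin n) (Fin d) ℝ)
    (f : ℝ → En n → ℝ → En d → A → B → ℝ)
    (t : ℝ) (x : En n) (r : ℝ) (q : En n) (X : Matrix (Fin n) (Fin n) ℝ) : ℝ :=
  ⨆ α : A, ⨅ β : B,
    (1 / 2) * Matrix.trace (σm t x α β * (σm t x α β).transpose * X)
      + (inner ℝ (b t x α β) q : ℝ)
      + f t x r (rowMul q (σm t x α β)) α β

/-- The upper Hamiltonian `H⁺ = inf_β sup_α [...]`. -/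
noncomputable def Hsup {n d : ℕ} (A B : Type)
    (b : ℝ → En n → A → B → En n)
    (σm : ℝ → En n → A → B → Matrix (Fin n) (Fin d) ℝ)
    (f : ℝ → En n → ℝ → En d → A → B → ℝ)
    (t : ℝ) (x : En n) (r : ℝ) (q : En n) (X : Matrix (Fin n) (Fin n) ℝ) : ℝ :=
  ⨅ β : B, ⨆ α : A,
    (1 / 2) * Matrix.trace (σm t x α β * (σm t x α β).transpose * X)
      + (inner ℝ (b t x α β) q : ℝ)
      + f t x r (rowMul q (σm t x α β)) α β

/-- `φ` is of class `C^{1,2}` on `[0,T)×ℝⁿ`, with time derivative `φt`,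
spatial gradient `Dφ` and spatial Hessian `D2φ`, all continuous on `[0,T)×ℝⁿ`. -/
structure IsC12 (T : ℝ) {n : ℕ} (φ φt : ℝ → En n → ℝ) (Dφ : ℝ → En n → En n)
    (D2φ : ℝ → En n → Matrix (Fin n) (Fin n) ℝ) : Prop where
  cont : ContinuousOn (fun p : ℝ × En n => φ p.1 p.2) (Ico 0 T ×ˢ univ)
  cont_t : ContinuousOn (fun p : ℝ × En n => φt p.1 p.2) (Ico 0 T ×ˢ univ)
  cont_D : ContinuousOn (fun p : ℝ × En n => Dφ p.1 p.2) (Ico 0 T ×ˢ univ)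
  cont_D2 : ContinuousOn (fun p : ℝ × En n => D2φ p.1 p.2) (Ico 0 T ×ˢ univ)
  deriv_t : ∀ t ∈ Ico (0 : ℝ) T, ∀ x : En n,
    HasDerivWithinAt (fun s => φ s x) (φt t x) (Ico 0 T) t
  grad_x : ∀ t ∈ Ico (0 : ℝ) T, ∀ x : En n, HasGradientAt (fun y => φ t y) (Dφ t x) x
  hess_x : ∀ t ∈ Ico (0 : ℝ) T, ∀ x : En n,
    HasFDerivAt (fun y => Dφ t y)
      (LinearMap.toContinuousLinearMap (Matrix.toEuclideanLin (D2φ t x))) x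

/-- `u` is a viscosity subsolution of the obstacle equation
`min{u-ℓ, max{-∂u/∂t - H(t,x,u,Du,D²u), u-ℓ'}} = 0` on `[0,T)×ℝⁿ`, `u(T,·) = G`. -/
def IsSubsolution (T : ℝ) {n : ℕ}
    (H : ℝ → En n → ℝ → En n → Matrix (Fin n) (Fin n) ℝ → ℝ)
    (ℓ ℓ' : ℝ → En n → ℝ) (G : En n → ℝ) (u : ℝ → En n → ℝ) : Prop :=
  UpperSemicontinuousOn (fun p : ℝ × En n => u p.1 p.2) (Icc 0 T ×ˢ univ)
  ∧ (∀ x : En n, u T x ≤ G x)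
  ∧ ∀ (φ φt : ℝ → En n → ℝ) (Dφ : ℝ → En n → En n)
      (D2φ : ℝ → En n → Matrix (Fin n) (Fin n) ℝ),
      IsC12 T φ φt Dφ D2φ →
      ∀ t ∈ Ico (0 : ℝ) T, ∀ x : En n,
        (∀ s ∈ Ico (0 : ℝ) T, ∀ y : En n, u s y - φ s y ≤ u t x - φ t x) →
        min (u t x - ℓ t x)
          (max (-(φt t x) - H t x (u t x) (Dφ t x) (D2φ t x)) (u t x - ℓ' t x)) ≤ 0

/-- `u` is a viscosity supersolution of the obstacle equation. -/
def IsSupersolution (T : ℝ) {n : ℕ}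
    (H : ℝ → En n → ℝ → En n → Matrix (Fin n) (Fin n) ℝ → ℝ)
    (ℓ ℓ' : ℝ → En n → ℝ) (G : En n → ℝ) (u : ℝ → En n → ℝ) : Prop :=
  LowerSemicontinuousOn (fun p : ℝ × En n => u p.1 p.2) (Icc 0 T ×ˢ univ)
  ∧ (∀ x : En n, G x ≤ u T x)
  ∧ ∀ (φ φt : ℝ → En n → ℝ) (Dφ : ℝ → En n → En n)
      (D2φ : ℝ → En n → Matrix (Fin n) (Fin n) ℝ),
      IsC12 T φ φt Dφ D2φ →
      ∀ t ∈ Ico (0 : ℝ) T, ∀ x : En n,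
        (∀ s ∈ Ico (0 : ℝ) T, ∀ y : En n, u t x - φ t x ≤ u s y - φ s y) →
        0 ≤ min (u t x - ℓ t x)
          (max (-(φt t x) - H t x (u t x) (Dφ t x) (D2φ t x)) (u t x - ℓ' t x))

/-- Hypothesis (H1): continuity of `b`, `σ` on `[0,T]×ℝⁿ×A×B` and uniform
Lipschitz continuity in `x`. -/
def HypH1 {n d : ℕ} (T : ℝ) (A B : Type) [TopologicalSpace A] [TopologicalSpace B]
    (b : ℝ → En n → A → B → En n)
    (σm : ℝ → En n → A → B → Matrix (Fin n) (Fin d) ℝ) : Prop :=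
  ContinuousOn (fun p : ℝ × En n × A × B => b p.1 p.2.1 p.2.2.1 p.2.2.2)
      (Icc 0 T ×ˢ (univ : Set (En n × A × B)))
  ∧ ContinuousOn (fun p : ℝ × En n × A × B => σm p.1 p.2.1 p.2.2.1 p.2.2.2)
      (Icc 0 T ×ˢ (univ : Set (En n × A × B)))
  ∧ ∃ CL > (0 : ℝ), ∀ t ∈ Icc (0 : ℝ) T, ∀ (x x' : En n) (α : A) (β : B),
      ‖b t x α β - b t x' α β‖ + frobNorm (σm t x α β - σm t x' α β) ≤ CL * ‖x - x'‖

/-- Hypothesis (H2): `g`, `h`, `h'` continuous and bounded, `h < h'`,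
`h(T,·) ≤ g ≤ h'(T,·)`; `F` continuous with quadratic growth in `z`
with constant `C`. -/
def HypH2 {n d : ℕ} (T C : ℝ) (A B : Type) [TopologicalSpace A] [TopologicalSpace B]
    (g : En n → ℝ) (h h' : ℝ → En n → ℝ)
    (F : ℝ → En n → ℝ → En d → A → B → ℝ) : Prop :=
  Continuous g ∧ (∃ M, ∀ x : En n, |g x| ≤ M)
  ∧ ContinuousOn (fun p : ℝ × En n => h p.1 p.2) (Icc 0 T ×ˢ univ)
  ∧ ContinuousOn (fun p : ℝ × En n => h' p.1 p.2) (Icc 0 T ×ˢ univ)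
  ∧ (∃ M, ∀ t ∈ Icc (0 : ℝ) T, ∀ x : En n, |h t x| ≤ M ∧ |h' t x| ≤ M)
  ∧ (∀ t ∈ Icc (0 : ℝ) T, ∀ x : En n, h t x < h' t x)
  ∧ (∀ x : En n, h T x ≤ g x ∧ g x ≤ h' T x)
  ∧ ContinuousOn
      (fun p : ℝ × En n × ℝ × En d × A × B =>
        F p.1 p.2.1 p.2.2.1 p.2.2.2.1 p.2.2.2.2.1 p.2.2.2.2.2)
      (Icc 0 T ×ˢ (univ : Set (En n × ℝ × En d × A × B)))
  ∧ 0 < C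
  ∧ ∀ t ∈ Icc (0 : ℝ) T, ∀ (x : En n) (y : ℝ) (z : En d) (α : A) (β : B),
      |F t x y z α β| ≤ C * (1 + ‖z‖ ^ 2)

/-- Hypothesis (H3): `F` is differentiable in `(x,y,z)`, with
`|∂F/∂x|, |∂F/∂z| ≤ C(1+|z|²)` and `∂F/∂y ≤ C_ε + ε|z|²` for every `ε > 0`. -/
def HypH3 {n d : ℕ} (T C : ℝ) (A B : Type)
    (F : ℝ → En n → ℝ → En d → A → B → ℝ) : Prop :=
  ∃ (Fx : ℝ → En n → ℝ → En d → A → B → En n)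
    (Fy : ℝ → En n → ℝ → En d → A → B → ℝ)
    (Fz : ℝ → En n → ℝ → En d → A → B → En d),
    (∀ t ∈ Icc (0 : ℝ) T, ∀ (x : En n) (y : ℝ) (z : En d) (α : A) (β : B),
      HasGradientAt (fun x' => F t x' y z α β) (Fx t x y z α β) x
      ∧ HasDerivAt (fun y' => F t x y' z α β) (Fy t x y z α β) y
      ∧ HasGradientAt (fun z' => F t x y z' α β) (Fz t x y z α β) z
      ∧ ‖Fx t x y z α β‖ ≤ C * (1 + ‖z‖ ^ 2)
      ∧ ‖Fz t x y z α β‖ ≤ C * (1 + ‖z‖ ^ 2))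
    ∧ ∀ ε > (0 : ℝ), ∃ Cε > (0 : ℝ), ∀ t ∈ Icc (0 : ℝ) T,
        ∀ (x : En n) (y : ℝ) (z : En d) (α : A) (β : B),
          Fy t x y z α β ≤ Cε + ε * ‖z‖ ^ 2

/-- The function `ρ(x) = (1/λ) ln((e^{λγx}+1)/γ)`. -/
noncomputable def rho (γ lam : ℝ) (x : ℝ) : ℝ :=
  (1 / lam) * Real.log ((Real.exp (lam * γ * x) + 1) / γ)

/-- `ρ'`. -/
noncomputable def rho' (γ lam : ℝ) : ℝ → ℝ := deriv (rho γ lam)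

/-- `ρ''`. -/
noncomputable def rho'' (γ lam : ℝ) : ℝ → ℝ := deriv (rho' γ lam)

/-- The transformed generator
`F̄(t,x,ū,z̄) = (ρ''(ū)/ρ'(ū))|z̄|² − Kρ(ū)/ρ'(ū) + (e^{Kt}/ρ'(ū)) F(t,x,e^{−Kt}ρ(ū)+C̃,e^{−Kt}ρ'(ū)z̄)`. -/
noncomputable def Fbar {n d : ℕ} {A B : Type} (γ lam K Ct : ℝ)
    (F : ℝ → En n → ℝ → En d → A → B → ℝ)
    (t : ℝ) (x : En n) (ub : ℝ) (zb : En d) (α : A) (β : B) : ℝ :=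
  (rho'' γ lam ub / rho' γ lam ub) * ‖zb‖ ^ 2
    - K * rho γ lam ub / rho' γ lam ub
    + (Real.exp (K * t) / rho' γ lam ub)
      * F t x (Real.exp (-(K * t)) * rho γ lam ub + Ct)
          ((Real.exp (-(K * t)) * rho' γ lam ub) • zb) α β

/-- The change of variable `ū(t,x) = ρ⁻¹(e^{Kt}(u(t,x) − C̃))`. -/
noncomputable def transf {n : ℕ} (γ lam K Ct : ℝ) (u : ℝ → En n → ℝ) : ℝ → En n → ℝ :=
  fun t x => Function.invFun (rho γ lam) (Real.exp (K * t) * (u t x - Ct))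

/-- `(p,q,X)` belongs to the second-order parabolic superjet `𝒫^{2,+}u(t₀,x₀)`. -/
def ParabSuperjet (T : ℝ) {n : ℕ} (u : ℝ → En n → ℝ) (t0 : ℝ) (x0 : En n)
    (p : ℝ) (q : En n) (X : Matrix (Fin n) (Fin n) ℝ) : Prop :=
  X.IsSymm ∧
  ∀ ε > (0 : ℝ), ∃ δ > (0 : ℝ), ∀ t ∈ Ico (0 : ℝ) T, ∀ x : En n,
    |t - t0| < δ → ‖x - x0‖ < δ →
    u t x ≤ u t0 x0 + p * (t - t0) + (inner ℝ q (x - x0) : ℝ)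
      + (1 / 2) * (inner ℝ (Matrix.toEuclideanLin X (x - x0)) (x - x0) : ℝ)
      + ε * (|t - t0| + ‖x - x0‖ ^ 2)

/-- The parabolic subjet `𝒫^{2,−}u = −𝒫^{2,+}(−u)`. -/
def ParabSubjet (T : ℝ) {n : ℕ} (u : ℝ → En n → ℝ) (t0 : ℝ) (x0 : En n)
    (p : ℝ) (q : En n) (X : Matrix (Fin n) (Fin n) ℝ) : Prop :=
  ParabSuperjet T (fun t x => -(u t x)) t0 x0 (-p) (-q) (-X)

/-- The closure `𝒫̄^{2,+}u(t₀,x₀)` of the parabolic superjet. -/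
def ClosedParabSuperjet (T : ℝ) {n : ℕ} (u : ℝ → En n → ℝ) (t0 : ℝ) (x0 : En n)
    (p : ℝ) (q : En n) (X : Matrix (Fin n) (Fin n) ℝ) : Prop :=
  ∃ (tk : ℕ → ℝ) (xk : ℕ → En n) (pk : ℕ → ℝ) (qk : ℕ → En n)
    (Xk : ℕ → Matrix (Fin n) (Fin n) ℝ),
    (∀ k, tk k ∈ Ico (0 : ℝ) T ∧ ParabSuperjet T u (tk k) (xk k) (pk k) (qk k) (Xk k))
    ∧ Tendsto tk atTop (nhds t0) ∧ Tendsto xk atTop (nhds x0)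
    ∧ Tendsto (fun k => u (tk k) (xk k)) atTop (nhds (u t0 x0))
    ∧ Tendsto pk atTop (nhds p) ∧ Tendsto qk atTop (nhds q)
    ∧ Tendsto Xk atTop (nhds X)

/-- The doubled and penalized function
`Ψ_{ε,η}(t,x,y) = ū(t,x) − v̄(t,y) − |x−y|²/ε² − η(|x|²+|y|²)`. -/
noncomputable def Psi {n : ℕ} (ub vb : ℝ → En n → ℝ) (ε η : ℝ)
    (t : ℝ) (x y : En n) : ℝ :=
  ub t x - vb t y - ‖x - y‖ ^ 2 / ε ^ 2 - η * (‖x‖ ^ 2 + ‖y‖ ^ 2)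

/-- The exponentially transformed generator
`f(t,x,y,z) = 2Cy[F(t,x,(ln y)/(2C), z/(2Cy)) − |z|²/(4Cy²)]` for `y > 0`, `0` otherwise. -/
noncomputable def expGen {n d : ℕ} {A B : Type} (C : ℝ)
    (F : ℝ → En n → ℝ → En d → A → B → ℝ)
    (t : ℝ) (x : En n) (y : ℝ) (z : En d) (α : A) (β : B) : ℝ :=
  if 0 < y then
    2 * C * y * (F t x (Real.log y / (2 * C)) ((1 / (2 * C * y)) • z) α β
      - ‖z‖ ^ 2 / (4 * C * y ^ 2))
  else 0

section LogTransformAux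

open InnerProductSpace

lemma rowMul_smul' {n d : ℕ} (a : ℝ) (q : En n) (M : Matrix (Fin n) (Fin d) ℝ) :
    rowMul (a • q) M = a • rowMul q M := by
  ext j
  simp [rowMul, Finset.mul_sum, mul_assoc]

lemma En_norm_sq_eq {d : ℕ} (z : En d) : ‖z‖ ^ 2 = ∑ j, (z j) ^ 2 := by
  rw [EuclideanSpace.norm_eq, Real.sq_sqrt (by positivity)]
  simp [sq_abs]

lemma trace_outer' {n d : ℕ} (σ : Matrix (Fin n) (Fin d) ℝ) (q : En n) :
    Matrix.trace (σ * σ.transpose * Matrix.of (fun i j => q i * q j))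
      = ∑ j, (rowMul q σ j) ^ 2 := by
  simp only [Matrix.trace, Matrix.diag, Matrix.mul_apply, Matrix.transpose_apply,
    Matrix.of_apply, rowMul, PiLp.toLp_apply, sq, Finset.sum_mul_sum, Finset.sum_mul, Finset.mul_sum]
  have key : ∀ (f : Fin n → Fin n → Fin d → ℝ),
      (∑ x, ∑ y, ∑ j, f x y j) = ∑ j, ∑ x, ∑ y, f x y j := by
    intro f
    calc (∑ x, ∑ y, ∑ j, f x y j)
        = ∑ x, ∑ j, ∑ y, f x y j := Finset.sum_congr rfl (fun x _ => Finset.sum_comm)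
      _ = ∑ j, ∑ x, ∑ y, f x y j := Finset.sum_comm
  rw [key (fun x y j => σ x j * σ y j * (q y * q x))]
  refine Finset.sum_congr rfl fun j _ => ?_
  rw [Finset.sum_comm]
  exact Finset.sum_congr rfl fun u _ => Finset.sum_congr rfl fun v _ => by ring

lemma outerCLM' {n : ℕ} (v : En n) :
    LinearMap.toContinuousLinearMap (Matrix.toEuclideanLin (Matrix.of fun i j => v i * v j))
      = ((toDual ℝ (En n)) v).smulRight v := by
  refine ContinuousLinearMap.ext fun k => ?_
  refine PiLp.ext fun i => ?_
  simp [Matrix.toEuclideanLin_apply, Matrix.mulVec, dotProduct,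
    ContinuousLinearMap.smulRight_apply, toDual_apply_apply, real_inner_comm,
    PiLp.inner_apply, RCLike.inner_apply, Finset.sum_mul, Finset.mul_sum]
  exact Finset.sum_congr rfl fun j _ => by ring

end LogTransformAux

/-- Logarithmic transform of supersolutions: if `w` is a viscosity
supersolution of `E(f, e^{2Ch}, e^{2Ch'}, e^{2Cg})` lying between the exponential
obstacles, then `u = (ln w)/(2C)` is a viscosity supersolution of `(I⁻)`. -/
theorem log_transform_supersolution
    {n d : ℕ} (hn : 1 ≤ n) (hd : 1 ≤ d)
    (T : ℝ) (hT : 0 < T)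
    (A B : Type) [MetricSpace A] [CompactSpace A] [Nonempty A]
    [MetricSpace B] [CompactSpace B] [Nonempty B]
    (b : ℝ → En n → A → B → En n)
    (σm : ℝ → En n → A → B → Matrix (Fin n) (Fin d) ℝ)
    (F : ℝ → En n → ℝ → En d → A → B → ℝ)
    (g : En n → ℝ) (h h' : ℝ → En n → ℝ) (C : ℝ)
    (hH1 : HypH1 T A B b σm) (hH2 : HypH2 T C A B g h h' F)
    (w : ℝ → En n → ℝ)
    (hw : IsSupersolution T (Hinf A B b σm (expGen C F))
        (fun t x => Real.exp (2 * C * h t x)) (fun t x => Real.exp (2 * C * h' t x))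
        (fun x => Real.exp (2 * C * g x)) w)
    (hbound : ∀ t ∈ Icc (0:ℝ) T, ∀ x : En n,
      Real.exp (2 * C * h t x) ≤ w t x ∧ w t x ≤ Real.exp (2 * C * h' t x)) :
    IsSupersolution T (Hinf A B b σm F) h h' g
      (fun t x => Real.log (w t x) / (2 * C)) := by
  classical
  obtain ⟨hwlsc, hwT, hwtest⟩ := hw
  obtain ⟨-, -, -, -, -, -, -, -, hC, -⟩ := hH2
  have h2C : (0:ℝ) < 2 * C := by linarith
  refine ⟨?_, ?_, ?_⟩
  · -- lower semicontinuity
    intro p hp cc hcc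
    have hp1 : p.1 ∈ Icc (0:ℝ) T := hp.1
    have hwp : 0 < w p.1 p.2 :=
      lt_of_lt_of_le (Real.exp_pos _) (hbound p.1 hp1 p.2).1
    have hcc' : cc < Real.log (w p.1 p.2) / (2 * C) := hcc
    have hlt : Real.exp (2 * C * cc) < w p.1 p.2 := by
      rw [lt_div_iff₀ h2C] at hcc'
      exact (Real.lt_log_iff_exp_lt hwp).1 (by linarith)
    filter_upwards [hwlsc p hp _ hlt] with q hq
    have hq0 : 0 < w q.1 q.2 := (Real.exp_pos _).trans hq
    have h3 : 2 * C * cc < Real.log (w q.1 q.2) := (Real.lt_log_iff_exp_lt hq0).2 hq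
    show cc < Real.log (w q.1 q.2) / (2 * C)
    rw [lt_div_iff₀ h2C]; linarith
  · -- terminal condition
    intro x
    have h1 := hwT x
    have hpos : 0 < w T x := lt_of_lt_of_le (Real.exp_pos _) h1
    have h2 : 2 * C * g x ≤ Real.log (w T x) := (Real.le_log_iff_exp_le hpos).2 h1
    show g x ≤ Real.log (w T x) / (2 * C)
    rw [le_div_iff₀ h2C]; linarith
  · -- the test-function property
    intro φ φt Dφ D2φ hφ t ht x hmin
    have htIcc : t ∈ Icc (0:ℝ) T := ⟨ht.1, ht.2.le⟩
    have hW : 0 < w t x := lt_of_lt_of_le (Real.exp_pos _) (hbound t htIcc x).1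
    set c : ℝ := w t x * Real.exp (-(2 * C * φ t x)) with hc
    have hcW : c * Real.exp (2 * C * φ t x) = w t x := by
      rw [hc, mul_assoc, ← Real.exp_add]; simp
    set ψ : ℝ → En n → ℝ := fun s y => c * Real.exp (2 * C * φ s y) with hψ
    set ψt : ℝ → En n → ℝ :=
      fun s y => c * (Real.exp (2 * C * φ s y) * (2 * C * φt s y)) with hψt
    set Dψ : ℝ → En n → En n :=
      fun s y => (c * Real.exp (2 * C * φ s y) * (2 * C)) • Dφ s y with hDψ
    set D2ψ : ℝ → En n → Matrix (Fin n) (Fin n) ℝ := fun s y =>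
      (c * Real.exp (2 * C * φ s y) * (2 * C)) •
        (D2φ s y + (2 * C) • Matrix.of (fun i j => Dφ s y i * Dφ s y j)) with hD2ψ
    have hψC12 : IsC12 T ψ ψt Dψ D2ψ := by
      constructor
      · simp only [hψ]
        exact continuousOn_const.mul (Real.continuous_exp.comp_continuousOn
          (continuousOn_const.mul hφ.cont))
      · simp only [hψt]
        exact continuousOn_const.mul ((Real.continuous_exp.comp_continuousOn
          (continuousOn_const.mul hφ.cont)).mul (continuousOn_const.mul hφ.cont_t))
      · simp only [hDψ]
        exact ((continuousOn_const.mul (Real.continuous_exp.comp_continuousOn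
          (continuousOn_const.mul hφ.cont))).mul continuousOn_const).smul hφ.cont_D
      · simp only [hD2ψ]
        refine ContinuousOn.smul ((continuousOn_const.mul
          (Real.continuous_exp.comp_continuousOn
            (continuousOn_const.mul hφ.cont))).mul continuousOn_const) ?_
        refine hφ.cont_D2.add (ContinuousOn.const_smul
          (g := fun p : ℝ × En n => Matrix.of fun i j => Dφ p.1 p.2 i * Dφ p.1 p.2 j) ?_ (2 * C))
        refine continuousOn_pi.2 ?_
        intro i
        rw [continuousOn_pi]
        intro j
        exact ((EuclideanSpace.proj i).continuous.comp_continuousOn hφ.cont_D).mul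
          ((EuclideanSpace.proj j).continuous.comp_continuousOn hφ.cont_D)
      · intro s hs x'
        simp only [hψ, hψt]
        exact (((hφ.deriv_t s hs x').const_mul (2*C)).exp).const_mul c
      · intro s hs x'
        simp only [hψ, hDψ]
        rw [hasGradientAt_iff_hasFDerivAt]
        have hf : HasFDerivAt (fun y => φ s y)
            (InnerProductSpace.toDual ℝ (En n) (Dφ s x')) x' :=
          (hφ.grad_x s hs x').hasFDerivAt
        have hgd : HasDerivAt (fun r : ℝ => c * Real.exp (2*C*r))
            (c * Real.exp (2*C*φ s x') * (2*C)) (φ s x') := by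
          have := (((hasDerivAt_id (φ s x')).const_mul (2*C)).exp).const_mul c
          simp only [id_eq] at this
          exact this.congr_deriv (by ring)
        have h2 := hgd.comp_hasFDerivAt x' hf
        rw [map_smul]
        exact h2
      · intro s hs x'
        simp only [hDψ, hD2ψ]
        have hsc : HasFDerivAt (fun y => c * Real.exp (2*C*φ s y) * (2*C))
            ((c * Real.exp (2*C*φ s x') * (2*C) * (2*C)) •
              ((InnerProductSpace.toDual ℝ (En n)) (Dφ s x'))) x' := by
          have hgd : HasDerivAt (fun r : ℝ => c * Real.exp (2*C*r) * (2*C))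
              (c * Real.exp (2*C*φ s x') * (2*C) * (2*C)) (φ s x') := by
            have := ((((hasDerivAt_id (φ s x')).const_mul (2*C)).exp).const_mul c).mul_const
              (2*C)
            simp only [id_eq] at this
            exact this.congr_deriv (by ring)
          have h2 := hgd.comp_hasFDerivAt x' (hφ.grad_x s hs x').hasFDerivAt
          exact h2
        have hmain := hsc.smul (hφ.hess_x s hs x')
        refine hmain.congr_fderiv ?_
        have hout := outerCLM' (Dφ s x')
        refine ContinuousLinearMap.ext fun k => ?_
        simp only [map_add, map_smul, ContinuousLinearMap.add_apply,
          ContinuousLinearMap.smul_apply, ContinuousLinearMap.coe_smul', Pi.smul_apply,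
          ContinuousLinearMap.smulRight_apply]
        rw [hout]
        simp only [ContinuousLinearMap.smulRight_apply, InnerProductSpace.toDual_apply_apply,
          smul_eq_mul]
        module
    have hmin' : ∀ s ∈ Ico (0:ℝ) T, ∀ y : En n, w t x - ψ t x ≤ w s y - ψ s y := by
      intro s hs y
      have hs' : s ∈ Icc (0:ℝ) T := ⟨hs.1, hs.2.le⟩
      have hWs : 0 < w s y := lt_of_lt_of_le (Real.exp_pos _) (hbound s hs' y).1
      have hm := hmin s hs y
      beta_reduce at hm
      have hexp : Real.log (w t x) - 2*C*φ t x ≤ Real.log (w s y) - 2*C*φ s y := by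
        have h4 := mul_le_mul_of_nonneg_left hm h2C.le
        have e1 : 2*C*(Real.log (w t x)/(2*C)) = Real.log (w t x) := by field_simp
        have e2 : 2*C*(Real.log (w s y)/(2*C)) = Real.log (w s y) := by field_simp
        rw [mul_sub, mul_sub, e1, e2] at h4
        linarith
      have hψle : ψ s y ≤ w s y := by
        have e : ψ s y = Real.exp (Real.log (w t x) + -(2*C*φ t x) + 2*C*φ s y) :=
          calc ψ s y = w t x * Real.exp (-(2*C*φ t x)) * Real.exp (2*C*φ s y) := by
                rw [hψ, hc]
            _ = Real.exp (Real.log (w t x)) * Real.exp (-(2*C*φ t x)) *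
                  Real.exp (2*C*φ s y) := by rw [Real.exp_log hW]
            _ = Real.exp (Real.log (w t x) + -(2*C*φ t x) + 2*C*φ s y) := by
                rw [← Real.exp_add, ← Real.exp_add]
        rw [e]
        exact (Real.le_log_iff_exp_le hWs).1 (by linarith)
      have hψtx : ψ t x = w t x := by rw [hψ]; exact hcW
      linarith
    have key := hwtest ψ ψt Dψ D2ψ hψC12 t ht x hmin'
    have hcW' : c * Real.exp (2 * C * φ t x) * (2 * C) = 2 * C * w t x := by
      rw [hcW]; ring
    have inner_eq : ∀ (α : A) (β : B),
        (1/2) * Matrix.trace (σm t x α β * (σm t x α β).transpose * D2ψ t x)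
          + (inner ℝ (b t x α β) (Dψ t x) : ℝ)
          + expGen C F t x (w t x) (rowMul (Dψ t x) (σm t x α β)) α β
        = (2 * C * w t x) *
          ((1/2) * Matrix.trace (σm t x α β * (σm t x α β).transpose * D2φ t x)
            + (inner ℝ (b t x α β) (Dφ t x) : ℝ)
            + F t x (Real.log (w t x) / (2*C)) (rowMul (Dφ t x) (σm t x α β)) α β) := by
      intro α β
      simp only [hDψ, hD2ψ, hcW']
      set σ := σm t x α β with hσ
      set ζ := rowMul (Dφ t x) σ with hζ
      have htr : Matrix.trace (σ * σ.transpose *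
            ((2*C*w t x) • (D2φ t x + (2*C) • Matrix.of fun i j => Dφ t x i * Dφ t x j)))
          = (2*C*w t x) * (Matrix.trace (σ * σ.transpose * D2φ t x)
              + (2*C) * ∑ j, (ζ j)^2) := by
        rw [Matrix.mul_smul, Matrix.trace_smul, Matrix.mul_add, Matrix.trace_add,
          Matrix.mul_smul, Matrix.trace_smul, trace_outer']
        simp only [smul_eq_mul, ← hζ]
      have hip : (inner ℝ (b t x α β) ((2*C*w t x) • Dφ t x) : ℝ)
          = (2*C*w t x) * (inner ℝ (b t x α β) (Dφ t x) : ℝ) :=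
        real_inner_smul_right _ _ _
      have hrm : rowMul ((2*C*w t x) • Dφ t x) σ = (2*C*w t x) • ζ := rowMul_smul' _ _ _
      have hEG : expGen C F t x (w t x) ((2*C*w t x) • ζ) α β
          = (2*C*w t x) * (F t x (Real.log (w t x) / (2*C)) ζ α β - C * ‖ζ‖^2) := by
        unfold expGen
        rw [if_pos hW]
        have h1 : (1 / (2*C*w t x)) • ((2*C*w t x) • ζ) = ζ := by
          rw [smul_smul, one_div, inv_mul_cancel₀ (by positivity), one_smul]
        have h2 : ‖(2*C*w t x) • ζ‖^2 = (2*C*w t x)^2 * ‖ζ‖^2 := by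
          rw [norm_smul]
          simp [mul_pow, sq_abs]
        rw [h1, h2]
        have hWne : w t x ≠ 0 := ne_of_gt hW
        have hCne : C ≠ 0 := ne_of_gt hC
        field_simp
        ring
      rw [hrm, hEG, htr, hip, En_norm_sq_eq]
      ring
    have hHam : Hinf A B b σm (expGen C F) t x (w t x) (Dψ t x) (D2ψ t x)
        = (2*C*w t x) * Hinf A B b σm F t x (Real.log (w t x) / (2*C))
            (Dφ t x) (D2φ t x) := by
      have hpos : (0:ℝ) ≤ 2*C*w t x := by positivity
      simp only [Hinf]
      rw [Real.mul_iSup_of_nonneg hpos]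
      refine iSup_congr fun α => ?_
      rw [Real.mul_iInf_of_nonneg hpos]
      exact iInf_congr fun β => inner_eq α β
    have hψt_tx : ψt t x = (2*C*w t x) * φt t x := by
      simp only [hψt]
      rw [← mul_assoc, hcW]; ring
    rw [le_min_iff] at key
    obtain ⟨k1, k2⟩ := key
    rw [le_min_iff]
    constructor
    · have h5 : 2*C*h t x ≤ Real.log (w t x) :=
        (Real.le_log_iff_exp_le hW).2 (by linarith)
      show 0 ≤ Real.log (w t x)/(2*C) - h t x
      rw [sub_nonneg, le_div_iff₀ h2C]
      nlinarith
    · rw [le_max_iff] at k2 ⊢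
      rcases k2 with k2 | k2
      · left
        have e : -(ψt t x) - Hinf A B b σm (expGen C F) t x (w t x) (Dψ t x) (D2ψ t x)
            = (2*C*w t x) * (-(φt t x) - Hinf A B b σm F t x
                (Real.log (w t x)/(2*C)) (Dφ t x) (D2φ t x)) := by
          rw [hψt_tx, hHam]; ring
        rw [e] at k2
        have hpos : (0:ℝ) < 2*C*w t x := by positivity
        have h6 := (mul_nonneg_iff_of_pos_left hpos).1 k2
        exact h6
      · right
        have h5 : 2*C*h' t x ≤ Real.log (w t x) :=
          (Real.le_log_iff_exp_le hW).2 (by linarith)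
        show 0 ≤ Real.log (w t x)/(2*C) - h' t x
        rw [sub_nonneg, le_div_iff₀ h2C]
        nlinarith
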